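/- Let m be even, gcd(i,m)=1, L a linear map on F_{2^m} with adjoint L* (tr(L(x)y)=tr(x L*(y))). Then F(x) = L(x^{2^i+1}) + x is a permutation of F_{2^m} if and only if for every v with L*(v) ≠ 0 there exists u ∈ F_{2^m} with L*(v) = u^{2^i+1} and tr_{m/2}(v/u) ≠ 0, where tr_{m/2} is the relative trace from F_{2^m} to F_4. -/

import Mathlib

open Finset Polynomial

namespace Stmt12Aux

def e2 : ZMod 2 → ℤ := fun a => if a = 0 then 1 else -1

lemma e2_add (a b : ZMod 2) : e2 (a + b) = e2 a * e2 b := by revert a b; decide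
lemma e2_zero : e2 0 = 1 := rfl
lemma e2_sq (a : ZMod 2) : e2 a * e2 a = 1 := by revert a; decide
lemma zmod2_eq_one {a : ZMod 2} (h : a ≠ 0) : a = 1 := by revert a; decide
lemma e2_add_one (a : ZMod 2) : e2 (a + 1) = - e2 a := by revert a; decide

lemma nat_bezout {a b g : ℕ} (ha : 0 < a) (hb : 0 < b) (h : Nat.gcd a b = g) :
    ∃ s t : ℕ, s * a = g + t * b := by
  have hB : (g : ℤ) = a * Nat.gcdA a b + b * Nat.gcdB a b := by
    rw [← h]; exact_mod_cast Nat.gcd_eq_gcd_ab a b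
  set x := Nat.gcdA a b with hx
  set y := Nat.gcdB a b with hy
  set N : ℤ := ((x.natAbs : ℤ) + (y.natAbs : ℤ) + 1) with hN
  have ha' : (1 : ℤ) ≤ a := by exact_mod_cast ha
  have hb' : (1 : ℤ) ≤ b := by exact_mod_cast hb
  have hx1 : -(x.natAbs : ℤ) ≤ x := by rw [← Int.abs_eq_natAbs]; exact neg_abs_le x
  have hy1 : y ≤ (y.natAbs : ℤ) := Int.le_natAbs
  have hN0 : 0 ≤ N := by positivity
  have hs : 0 ≤ x + N * b := by nlinarith
  have ht : 0 ≤ N * a - y := by nlinarith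
  refine ⟨(x + N * b).toNat, (N * a - y).toNat, ?_⟩
  have key : ((x + N * b).toNat : ℤ) * a = (g : ℤ) + ((N * a - y).toNat : ℤ) * b := by
    rw [Int.toNat_of_nonneg hs, Int.toNat_of_nonneg ht]
    linear_combination -hB
  exact_mod_cast key

lemma iter_fix {M : Type*} [Monoid M] (x : M) (n : ℕ) (h : x ^ (2 ^ n) = x) (k : ℕ) :
    x ^ (2 ^ (k * n)) = x := by
  induction k with
  | zero => simp
  | succ k ih =>
    have h2 : (2 : ℕ) ^ ((k + 1) * n) = 2 ^ n * 2 ^ (k * n) := by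
      rw [← pow_add]; ring_nf
    rw [h2, pow_mul, h, ih]

lemma fix_gcd {M : Type*} [Monoid M] (x : M) {a b g : ℕ} (ha : 0 < a) (hb : 0 < b)
    (hg : Nat.gcd a b = g) (hxa : x ^ (2 ^ a) = x) (hxb : x ^ (2 ^ b) = x) :
    x ^ (2 ^ g) = x := by
  obtain ⟨s, t, hst⟩ := nat_bezout ha hb hg
  have h1 : x ^ (2 ^ (s * a)) = x := iter_fix x a hxa s
  rw [hst] at h1
  have h2 : (2 : ℕ) ^ (g + t * b) = 2 ^ (t * b) * 2 ^ g := by rw [← pow_add]; ring_nf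
  rw [h2, pow_mul, iter_fix x b hxb t] at h1
  exact h1


section FieldBasics
variable {m : ℕ} [Fintype (GaloisField 2 m)]

local notation "K" => GaloisField 2 m
local notation "trK" => Algebra.trace (ZMod 2) (GaloisField 2 m)

lemma char2_add_eq_zero (x y : K) : x + y = 0 ↔ x = y := by
  rw [CharTwo.add_eq_iff_eq_add, zero_add]

lemma cardK (hm : m ≠ 0) : Fintype.card K = 2 ^ m := by
  have := GaloisField.card 2 m hm
  simpa [Nat.card_eq_fintype_card] using this

lemma powK (hm : m ≠ 0) (x : K) : x ^ (2 ^ m) = x := by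
  rw [← cardK hm]; exact FiniteField.pow_card x

noncomputable def frobAlg (m : ℕ) : GaloisField 2 m ≃ₐ[ZMod 2] GaloisField 2 m :=
  AlgEquiv.ofRingEquiv (f := frobeniusEquiv (GaloisField 2 m) 2) (fun c => by
    rw [frobeniusEquiv_def, ← map_pow]; congr 1; revert c; decide)

lemma tr_sq (x : K) : trK (x ^ 2) = trK x := by
  have := Algebra.trace_eq_of_algEquiv (frobAlg m) x
  simpa [frobAlg, frobeniusEquiv_def, frobenius_def, AlgEquiv.ofRingEquiv] using this

lemma tr_pow2 (x : K) (j : ℕ) : trK (x ^ (2 ^ j)) = trK x := by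
  induction j with
  | zero => simp
  | succ j ih =>
    have h2 : (2 : ℕ) ^ (j + 1) = 2 ^ j * 2 := by ring
    rw [h2, pow_mul, tr_sq, ih]

lemma tr_nondeg {c : K} (hc : c ≠ 0) : ∃ b : K, trK (c * b) ≠ 0 := by
  have htr := (traceForm_nondegenerate (ZMod 2) K).1 c
  simp_rw [Algebra.traceForm_apply] at htr
  by_contra! hf
  exact hc (htr fun y => hf y)

lemma tr_one (hm : m ≠ 0) (hme : Even m) : trK 1 = 0 := by
  have h := Algebra.trace_algebraMap (R := ZMod 2) (S := GaloisField 2 m) 1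
  rw [map_one, GaloisField.finrank 2 hm] at h
  rw [h, nsmul_eq_mul, mul_one]
  exact (ZMod.natCast_eq_zero_iff m 2).mpr hme.two_dvd

end FieldBasics

set_option maxHeartbeats 800000
section Sums
variable {m : ℕ} [Fintype (GaloisField 2 m)] [DecidableEq (GaloisField 2 m)]

local notation "K" => GaloisField 2 m
local notation "trK" => Algebra.trace (ZMod 2) (GaloisField 2 m)


/-- Sum of the sign character over an additively closed finset vanishes if the
additive function `ψ` is somewhere nonzero on it. -/
lemma sum_e2_closed (G : Finset K) (hcl : ∀ c ∈ G, ∀ d ∈ G, c + d ∈ G)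
    (ψ : K → ZMod 2) (hψ : ∀ c d, ψ (c + d) = ψ c + ψ d)
    {c₀ : K} (hc₀ : c₀ ∈ G) (hne : ψ c₀ ≠ 0) :
    ∑ c ∈ G, e2 (ψ c) = 0 := by
  have himg : G.image (· + c₀) = G := by
    apply Finset.eq_of_subset_of_card_le
    · intro z hz
      obtain ⟨c, hc, rfl⟩ := Finset.mem_image.mp hz
      exact hcl c hc c₀ hc₀
    · rw [Finset.card_image_of_injective _ (add_left_injective c₀)]
  have h1 : ∑ c ∈ G, e2 (ψ c) = ∑ c ∈ G, e2 (ψ (c + c₀)) := by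
    conv_lhs => rw [← himg]
    rw [Finset.sum_image (by intro a _ b _ h; exact add_left_injective c₀ h)]
  have h2 : ∀ c : K, e2 (ψ (c + c₀)) = - e2 (ψ c) := by
    intro c
    rw [hψ, zmod2_eq_one hne, e2_add_one]
  have h3 : ∑ c ∈ G, e2 (ψ (c + c₀)) = - ∑ c ∈ G, e2 (ψ c) := by
    rw [← Finset.sum_neg_distrib]
    exact Finset.sum_congr rfl fun c _ => h2 c
  rw [h3] at h1
  linarith

lemma sum_e2_full (hm : m ≠ 0) (c : K) :
    ∑ x : K, e2 (trK (c * x)) = if c = 0 then (2 ^ m : ℤ) else 0 := by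
  split_ifs with h
  · subst h
    simp only [zero_mul, map_zero, e2_zero]
    rw [Finset.sum_const, Finset.card_univ, cardK hm]
    simp
  · obtain ⟨b, hb⟩ := tr_nondeg h
    exact sum_e2_closed Finset.univ (by simp) (fun x => trK (c * x))
      (fun x y => by rw [mul_add, map_add]) (Finset.mem_univ b) hb

/-- The square of a character sum of a "quadratic" function. -/
lemma sq_sum (hm : m ≠ 0) (f : K → ZMod 2) (r : K → K)
    (hd : ∀ x d : K, f (x + d) = f x + trK (x * r d) + f d) :
    (∑ x : K, e2 (f x)) ^ 2 =
      (2 ^ m : ℤ) * ∑ d ∈ Finset.univ.filter (fun d : K => r d = 0), e2 (f d) := by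
  have step1 : (∑ x : K, e2 (f x)) ^ 2 = ∑ x : K, ∑ d : K, e2 (f x) * e2 (f (x + d)) := by
    rw [sq, Finset.sum_mul_sum]
    refine Finset.sum_congr rfl fun x _ => ?_
    exact (Fintype.sum_equiv (Equiv.addLeft x) _ _ (fun d => rfl)).symm
  have step2 : ∀ x d : K, e2 (f x) * e2 (f (x + d)) = e2 (trK (x * r d)) * e2 (f d) := by
    intro x d
    rw [hd x d, e2_add, e2_add, ← mul_assoc, ← mul_assoc, e2_sq, one_mul]
  simp only [step2] at step1
  rw [step1, Finset.sum_comm]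
  have step3 : ∀ d : K, ∑ x : K, e2 (trK (x * r d)) * e2 (f d) =
      (if r d = 0 then (2 ^ m : ℤ) else 0) * e2 (f d) := by
    intro d
    rw [← Finset.sum_mul, ← sum_e2_full hm (r d)]
    congr 1
    exact Finset.sum_congr rfl fun x _ => by rw [mul_comm x (r d)]
  simp only [step3]
  have h4 : ∀ d : K, (if r d = 0 then (2 ^ m : ℤ) else 0) * e2 (f d) =
      (if r d = 0 then (2 ^ m : ℤ) * e2 (f d) else 0) := by
    intro d; split_ifs <;> simp
  simp only [h4]
  rw [← Finset.sum_filter, Finset.mul_sum]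

end Sums

section Bij
variable {m : ℕ} [Fintype (GaloisField 2 m)] [DecidableEq (GaloisField 2 m)]

local notation "K" => GaloisField 2 m
local notation "trK" => Algebra.trace (ZMod 2) (GaloisField 2 m)

lemma sums_of_bij (hm : m ≠ 0) (F : K → K) (hF : Function.Bijective F) :
    ∀ v : K, v ≠ 0 → ∑ x : K, e2 (trK (v * F x)) = 0 := by
  intro v hv
  have h1 : ∑ x : K, e2 (trK (v * F x)) = ∑ y : K, e2 (trK (v * y)) :=
    Fintype.sum_bijective F hF _ _ (fun x => rfl)
  rw [h1, sum_e2_full hm v, if_neg hv]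

lemma bij_of_sums (hm : m ≠ 0) (F : K → K)
    (h : ∀ v : K, v ≠ 0 → ∑ x : K, e2 (trK (v * F x)) = 0) :
    Function.Bijective F := by
  set P := (Finset.univ ×ˢ Finset.univ).filter (fun p : K × K => F p.1 = F p.2) with hP
  have key : ∑ v : K, (∑ x : K, e2 (trK (v * F x))) ^ 2 = (2 ^ m : ℤ) * (P.card : ℤ) := by
    have e1 : ∀ v : K, (∑ x : K, e2 (trK (v * F x))) ^ 2 =
        ∑ p ∈ Finset.univ ×ˢ Finset.univ, e2 (trK ((F p.1 + F p.2) * v)) := by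
      intro v
      rw [sq, Finset.sum_mul_sum, ← Finset.sum_product']
      refine Finset.sum_congr rfl fun p _ => ?_
      rw [← e2_add, ← map_add, ← mul_add, mul_comm v]
    simp only [e1]
    rw [Finset.sum_comm]
    have he2 : ∀ p : K × K, ∑ v : K, e2 (trK ((F p.1 + F p.2) * v)) =
        if F p.1 = F p.2 then (2 ^ m : ℤ) else 0 := by
      intro p
      rw [sum_e2_full hm]
      congr 1
      simp only [eq_iff_iff]
      exact char2_add_eq_zero _ _
    simp only [he2]
    rw [← Finset.sum_filter, ← hP, Finset.sum_const, nsmul_eq_mul, mul_comm]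
  have key2 : ∑ v : K, (∑ x : K, e2 (trK (v * F x))) ^ 2 = (2 ^ m : ℤ) * (2 ^ m : ℤ) := by
    rw [Finset.sum_eq_single_of_mem 0 (Finset.mem_univ 0)
      (fun v _ hv => by rw [h v hv]; ring)]
    have h0 : ∀ x : K, e2 (trK ((0 : K) * F x)) = 1 := fun x => by
      rw [zero_mul, map_zero, e2_zero]
    rw [Finset.sum_congr rfl fun x _ => h0 x, Finset.sum_const, Finset.card_univ, cardK hm]
    push_cast; ring
  have hPcard : P.card = 2 ^ m := by
    have h2 : (2 ^ m : ℤ) * (P.card : ℤ) = (2 ^ m : ℤ) * (2 ^ m : ℤ) := by rw [← key, key2]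
    have h3 : (P.card : ℤ) = (2 ^ m : ℤ) := mul_left_cancel₀ (by positivity) h2
    exact_mod_cast h3
  have hinj : Function.Injective F := by
    intro aa bb hab
    by_contra hne
    have hdiag : (Finset.univ.image fun x : K => (x, x)).card = 2 ^ m := by
      rw [Finset.card_image_of_injective _ (fun a b hab2 => congrArg Prod.fst hab2),
        Finset.card_univ, cardK hm]
    have hc2 : ((bb, aa)) ∉ (Finset.univ.image fun x : K => (x, x)) := by
      intro hmem
      obtain ⟨x, -, hx⟩ := Finset.mem_image.mp hmem
      exact hne (((congrArg Prod.snd hx).symm.trans (congrArg Prod.fst hx)))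
    have hc1 : ((aa, bb)) ∉ insert ((bb, aa)) (Finset.univ.image fun x : K => (x, x)) := by
      intro hmem
      rcases Finset.mem_insert.mp hmem with h1 | h2
      · exact hne (congrArg Prod.fst h1)
      · obtain ⟨x, -, hx⟩ := Finset.mem_image.mp h2
        exact hne (((congrArg Prod.fst hx).symm.trans (congrArg Prod.snd hx)))
    have hsub : insert ((aa, bb)) (insert ((bb, aa)) (Finset.univ.image fun x : K => (x, x))) ⊆ P := by
      intro p hp
      rw [hP, Finset.mem_filter]
      refine ⟨Finset.mem_product.mpr ⟨Finset.mem_univ _, Finset.mem_univ _⟩, ?_⟩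
      rcases Finset.mem_insert.mp hp with rfl | hp2
      · exact hab
      · rcases Finset.mem_insert.mp hp2 with rfl | hp3
        · exact hab.symm
        · obtain ⟨x, -, hx⟩ := Finset.mem_image.mp hp3
          rw [← hx]
    have hcard := Finset.card_le_card hsub
    rw [Finset.card_insert_of_notMem hc1, Finset.card_insert_of_notMem hc2, hdiag, hPcard]
      at hcard
    omega
  exact (Finite.injective_iff_bijective).mp hinj

end Bij

section Trel
variable {m : ℕ} [Fintype (GaloisField 2 m)]

local notation "K" => GaloisField 2 m
local notation "trK" => Algebra.trace (ZMod 2) (GaloisField 2 m)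

lemma four_eq : (4 : ℕ) = 2 ^ 2 := by norm_num

lemma c4_pow_even {c : K} (hc : c ^ 4 = c) (k : ℕ) : c ^ (2 ^ (2 * k)) = c := by
  have h := iter_fix c 2 (by rw [← four_eq]; exact hc) k
  rwa [mul_comm] at h

lemma c4_pow_odd {c : K} (hc : c ^ 4 = c) {i : ℕ} (hodd : Odd i) :
    c ^ (2 ^ i) = c ^ 2 := by
  obtain ⟨k, rfl⟩ := hodd
  have h2 : (2 : ℕ) ^ (2 * k + 1) = 2 ^ (2 * k) * 2 := by rw [pow_succ]
  rw [h2, pow_mul, c4_pow_even hc]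

lemma c4_add {c d : K} (hc : c ^ 4 = c) (hd : d ^ 4 = d) : (c + d) ^ 4 = c + d := by
  rw [four_eq, add_pow_char_pow, ← four_eq, hc, hd]

lemma c4_mul {c d : K} (hc : c ^ 4 = c) (hd : d ^ 4 = d) : (c * d) ^ 4 = c * d := by
  rw [mul_pow, hc, hd]

lemma c4_inv {c : K} (hc : c ^ 4 = c) : c⁻¹ ^ 4 = c⁻¹ := by
  rw [inv_pow, hc]

lemma c4_cube {c : K} (hc : c ^ 4 = c) (hc0 : c ≠ 0) : c ^ 3 = 1 := by
  have h : c ^ 3 * c = 1 * c := by rw [one_mul, ← pow_succ, hc]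
  exact mul_right_cancel₀ hc0 h

lemma tr_c4_cube (hm : m ≠ 0) (hme : Even m) {c : K} (hc : c ^ 4 = c) :
    trK (c ^ 3) = 0 := by
  rcases eq_or_ne c 0 with rfl | hc0
  · simp
  · rw [c4_cube hc hc0]
    exact tr_one hm hme

/-- The relative trace onto the 4-element subfield. -/
noncomputable def Trel (m : ℕ) (w : GaloisField 2 m) : GaloisField 2 m :=
  ∑ k ∈ Finset.range (m / 2), w ^ (2 ^ (2 * k))

lemma Trel_zero : Trel m 0 = 0 := by
  unfold Trel
  refine Finset.sum_eq_zero fun k _ => ?_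
  exact zero_pow (by positivity)

lemma Trel_add (w w' : K) : Trel m (w + w') = Trel m w + Trel m w' := by
  unfold Trel
  rw [← Finset.sum_add_distrib]
  exact Finset.sum_congr rfl fun k _ => by rw [add_pow_char_pow]

lemma Trel_smul {c : K} (hc : c ^ 4 = c) (w : K) : Trel m (c * w) = c * Trel m w := by
  unfold Trel
  rw [Finset.mul_sum]
  refine Finset.sum_congr rfl fun k _ => ?_
  rw [mul_pow, c4_pow_even hc]

lemma Trel_mem (hm : m ≠ 0) (hme : Even m) (w : K) : (Trel m w) ^ 4 = Trel m w := by
  unfold Trel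
  rw [four_eq, sum_pow_char_pow]
  have hterm : ∀ k : ℕ, (w ^ (2 ^ (2 * k))) ^ (2 ^ 2) = w ^ (2 ^ (2 * (k + 1))) := by
    intro k
    rw [← pow_mul, ← pow_add]
    ring_nf
  rw [Finset.sum_congr rfl fun k _ => hterm k]
  have h1 := Finset.sum_range_succ' (fun j => w ^ (2 ^ (2 * j))) (m / 2)
  have h2 := Finset.sum_range_succ (fun j => w ^ (2 ^ (2 * j))) (m / 2)
  have h6 := h1.symm.trans h2
  simp only [Nat.mul_zero, pow_zero, pow_one] at h6
  have h3 : w ^ (2 ^ (2 * (m / 2))) = w := by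
    rw [Nat.two_mul_div_two_of_even hme]
    exact powK hm w
  rw [h3] at h6
  exact add_right_cancel h6

lemma Trel_pow4 (hm : m ≠ 0) (hme : Even m) (y : K) :
    Trel m (y ^ 4) = (Trel m y) ^ 4 := by
  unfold Trel
  rw [four_eq, sum_pow_char_pow]
  exact Finset.sum_congr rfl fun k _ => by
    rw [← pow_mul, ← pow_mul, mul_comm]

lemma Trel_exists_ne (hm : m ≠ 0) (hme : Even m) : ∃ w : K, Trel m w ≠ 0 := by
  by_contra hall
  push_neg at hall
  set p : Polynomial K := ∑ k ∈ Finset.range (m / 2), Polynomial.X ^ (2 ^ (2 * k)) with hp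
  have hm2 : 2 ≤ m := by
    rcases hme with ⟨j, rfl⟩
    omega
  have hmd : 0 < m / 2 := by omega
  have heval : ∀ w : K, p.eval w = Trel m w := by
    intro w
    rw [hp, Polynomial.eval_finset_sum]
    exact Finset.sum_congr rfl fun k _ => by rw [Polynomial.eval_pow, Polynomial.eval_X]
  have hcoeff : p.coeff 1 = 1 := by
    rw [hp, Polynomial.finset_sum_coeff]
    have hterm : ∀ k ∈ Finset.range (m / 2),
        ((Polynomial.X : Polynomial K) ^ (2 ^ (2 * k))).coeff 1 = if k = 0 then 1 else 0 := by
      intro k _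
      rw [Polynomial.coeff_X_pow]
      rcases eq_or_ne k 0 with rfl | hk
      · norm_num
      · rw [if_neg, if_neg hk]
        have : 4 ≤ 2 ^ (2 * k) := by
          calc (4:ℕ) = 2 ^ 2 := by norm_num
          _ ≤ 2 ^ (2 * k) := Nat.pow_le_pow_right (by norm_num) (by omega)
        omega
    rw [Finset.sum_congr rfl hterm, Finset.sum_ite_eq' (Finset.range (m / 2)) 0 (fun _ => (1:K))]
    rw [if_pos (Finset.mem_range.mpr hmd)]
  have hdeg : p.natDegree < Fintype.card K := by
    rw [cardK hm]
    have hle : p.natDegree ≤ 2 ^ (m - 2) := by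
      rw [hp]
      refine Polynomial.natDegree_sum_le_of_forall_le _ _ fun k hk => ?_
      rw [Polynomial.natDegree_X_pow]
      refine Nat.pow_le_pow_right (by norm_num) ?_
      have := Finset.mem_range.mp hk
      omega
    have hlt : (2:ℕ) ^ (m - 2) < 2 ^ m := Nat.pow_lt_pow_right (by norm_num) (by omega)
    omega
  have hzero : p = 0 := by
    refine Polynomial.eq_zero_of_natDegree_lt_card_of_eval_eq_zero p
      Function.injective_id (fun w => ?_) hdeg
    rw [heval]; exact hall w
  rw [hzero] at hcoeff
  simp at hcoeff

noncomputable def TrelHom : GaloisField 2 m →+ GaloisField 2 m :=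
  { toFun := Trel m, map_zero' := Trel_zero, map_add' := Trel_add }

noncomputable def phiHom : GaloisField 2 m →+ GaloisField 2 m :=
  { toFun := fun y => y ^ 4 + y
    map_zero' := by norm_num
    map_add' := fun a b => by
      show (a + b) ^ 4 + (a + b) = (a ^ 4 + a) + (b ^ 4 + b)
      rw [four_eq, add_pow_char_pow, ← four_eq]
      ring }

lemma card_split (f : GaloisField 2 m →+ GaloisField 2 m) :
    Nat.card K = Nat.card f.range * Nat.card f.ker := by
  rw [AddSubgroup.card_eq_card_quotient_mul_card_addSubgroup f.ker]
  congr 1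
  exact Nat.card_congr (QuotientAddGroup.quotientKerEquivRange f).toEquiv

lemma range_Trel_eq_ker_phi (hm : m ≠ 0) (hme : Even m) :
    (TrelHom (m := m)).range = (phiHom (m := m)).ker := by
  obtain ⟨w₀, hw₀⟩ := Trel_exists_ne hm hme
  ext x
  simp only [AddMonoidHom.mem_range, AddMonoidHom.mem_ker]
  constructor
  · rintro ⟨w, rfl⟩
    show (Trel m w) ^ 4 + Trel m w = 0
    rw [Trel_mem hm hme, CharTwo.add_self_eq_zero]
  · intro hx
    have hx4 : x ^ 4 = x := (char2_add_eq_zero _ _).mp hx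
    have hs4 : (Trel m w₀) ^ 4 = Trel m w₀ := Trel_mem hm hme w₀
    have hxs : (x * (Trel m w₀)⁻¹) ^ 4 = x * (Trel m w₀)⁻¹ := c4_mul hx4 (c4_inv hs4)
    refine ⟨x * (Trel m w₀)⁻¹ * w₀, ?_⟩
    show Trel m (x * (Trel m w₀)⁻¹ * w₀) = x
    rw [Trel_smul hxs]
    field_simp

lemma ker_Trel_eq_range_phi (hm : m ≠ 0) (hme : Even m) :
    (TrelHom (m := m)).ker = (phiHom (m := m)).range := by
  have hle : (phiHom (m := m)).range ≤ (TrelHom (m := m)).ker := by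
    rintro x ⟨y, rfl⟩
    show Trel m (y ^ 4 + y) = 0
    rw [Trel_add, Trel_pow4 hm hme, Trel_mem hm hme, CharTwo.add_self_eq_zero]
  refine (AddSubgroup.eq_of_le_of_card_ge hle ?_).symm
  have e1 := card_split (TrelHom (m := m))
  have e2 := card_split (phiHom (m := m))
  rw [range_Trel_eq_ker_phi hm hme] at e1
  have hpos : 0 < Nat.card (phiHom (m := m)).ker := Nat.card_pos
  have : Nat.card (TrelHom (m := m)).ker = Nat.card (phiHom (m := m)).range := by
    have h12 : Nat.card (phiHom (m := m)).ker * Nat.card (TrelHom (m := m)).ker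
        = Nat.card (phiHom (m := m)).range * Nat.card (phiHom (m := m)).ker := by
      rw [← e1, e2]
    rw [mul_comm (Nat.card (phiHom (m := m)).range) _] at h12
    exact Nat.eq_of_mul_eq_mul_left hpos h12
  omega

lemma tr_of_Trel_zero (hm : m ≠ 0) (hme : Even m) {z : K} (hz : Trel m z = 0)
    {c : K} (hc : c ^ 4 = c) : trK (z * c) = 0 := by
  have hzmem : z ∈ (TrelHom (m := m)).ker := by
    rw [AddMonoidHom.mem_ker]; exact hz
  rw [ker_Trel_eq_range_phi hm hme] at hzmem
  obtain ⟨y, hy⟩ := hzmem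
  have hy' : y ^ 4 + y = z := hy
  rw [← hy', add_mul, map_add]
  have h4 : y ^ 4 * c = (y * c) ^ 4 := by rw [mul_pow, hc]
  rw [h4, four_eq, tr_pow2 (y * c) 2, CharTwo.add_self_eq_zero]

lemma Trel_ne_iff (hm : m ≠ 0) (hme : Even m) (w : K) :
    Trel m w ≠ 0 ↔ ∃ c : K, c ^ 4 = c ∧ trK (w * c) ≠ 0 := by
  constructor
  · intro hT
    by_contra hno
    push_neg at hno
    obtain ⟨b, hb⟩ := tr_nondeg (c := (1 : K)) one_ne_zero
    rw [one_mul] at hb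
    have hs4 : (Trel m w) ^ 4 = Trel m w := Trel_mem hm hme w
    have hsinv : ((Trel m w)⁻¹) ^ 4 = (Trel m w)⁻¹ := c4_inv hs4
    have hμ : (Trel m b) ^ 4 = Trel m b := Trel_mem hm hme b
    have hc : (Trel m b * (Trel m w)⁻¹) ^ 4 = Trel m b * (Trel m w)⁻¹ := c4_mul hμ hsinv
    have hTz : Trel m (b + Trel m b * (Trel m w)⁻¹ * w) = 0 := by
      rw [Trel_add, Trel_smul hc]
      field_simp
      rw [mul_add, mul_one]
      exact CharTwo.add_self_eq_zero (Trel m b)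
    have h0 := tr_of_Trel_zero hm hme hTz (c := 1) (by norm_num)
    rw [mul_one, map_add] at h0
    have h1 : trK (Trel m b * (Trel m w)⁻¹ * w) = 0 := by
      have := hno (Trel m b * (Trel m w)⁻¹) hc
      rwa [mul_comm] at this
    rw [h1, add_zero] at h0
    exact hb h0
  · rintro ⟨c, hc, htr⟩ hT0
    exact htr (tr_of_Trel_zero hm hme hT0 hc)

end Trel

section Quad
variable {m i : ℕ} [Fintype (GaloisField 2 m)]

local notation "K" => GaloisField 2 m
local notation "trK" => Algebra.trace (ZMod 2) (GaloisField 2 m)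

lemma i_odd (hme : Even m) (hi : Nat.gcd i m = 1) : Odd i := by
  rcases Nat.even_or_odd i with he | ho
  · exfalso
    have h2 : 2 ∣ Nat.gcd i m := Nat.dvd_gcd he.two_dvd hme.two_dvd
    rw [hi] at h2
    exact absurd (Nat.dvd_one.mp h2) (by norm_num)
  · exact ho

lemma i_pos (hm : m ≠ 0) (hme : Even m) (hi : Nat.gcd i m = 1) : 0 < i := by
  rcases Nat.eq_zero_or_pos i with rfl | h
  · exfalso
    rw [Nat.gcd_zero_left] at hi
    subst hi
    exact Nat.not_even_one hme
  · exact h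

lemma gcd_two (hme : Even m) (hi : Nat.gcd i m = 1) : Nat.gcd (2 * i) m = 2 := by
  obtain ⟨m', rfl⟩ := hme
  have key : Nat.gcd i m' = 1 := by
    have hdvd : Nat.gcd i m' ∣ Nat.gcd i (m' + m') :=
      Nat.dvd_gcd (Nat.gcd_dvd_left _ _)
        (Dvd.dvd.add (Nat.gcd_dvd_right i m') (Nat.gcd_dvd_right i m'))
    rw [hi] at hdvd
    exact Nat.dvd_one.mp hdvd
  have h2 : m' + m' = 2 * m' := by ring
  rw [h2, Nat.gcd_mul_left, key, mul_one]

lemma powim (hm : m ≠ 0) (x : K) : x ^ (2 ^ (i * m)) = x :=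
  iter_fix x m (powK hm x) i

lemma pow2i_inj {x y : K} (h : x ^ (2 ^ i) = y ^ (2 ^ i)) : x = y := by
  have h1 : (x + y) ^ (2 ^ i) = 0 := by
    rw [add_pow_char_pow, h, CharTwo.add_self_eq_zero]
  have h2 : x + y = 0 := by
    exact pow_eq_zero_iff (by positivity) |>.mp h1
  exact (char2_add_eq_zero _ _).mp h2

lemma exp_helper (hm : m ≠ 0) : i * (m - 1) + i = i * m := by
  have h1 : m - 1 + 1 = m := Nat.succ_pred_eq_of_pos (Nat.pos_of_ne_zero hm)
  calc i * (m - 1) + i = i * ((m - 1) + 1) := by ring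
  _ = i * m := by rw [h1]

lemma pow_shift (hm : m ≠ 0) (c : K) : (c ^ (2 ^ (i * (m - 1)))) ^ (2 ^ i) = c := by
  rw [← pow_mul, ← pow_add, exp_helper hm, powim hm]

lemma tr_shift (hm : m ≠ 0) (x c : K) :
    trK (x ^ (2 ^ i) * c) = trK (x * c ^ (2 ^ (i * (m - 1)))) := by
  have h1 : (x * c ^ (2 ^ (i * (m - 1)))) ^ (2 ^ i) = x ^ (2 ^ i) * c := by
    rw [mul_pow, pow_shift hm]
  rw [← h1, tr_pow2]

lemma quad_decomp (hm : m ≠ 0) (a v : K) (x d : K) :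
    trK (a * (x + d) ^ (2 ^ i + 1) + v * (x + d)) =
      trK (a * x ^ (2 ^ i + 1) + v * x) +
      trK (x * ((a * d) ^ (2 ^ (i * (m - 1))) + a * d ^ (2 ^ i))) +
      trK (a * d ^ (2 ^ i + 1) + v * d) := by
  have expand : a * (x + d) ^ (2 ^ i + 1) + v * (x + d) =
      (a * x ^ (2 ^ i + 1) + v * x) +
      ((x ^ (2 ^ i) * (a * d)) + (x * (a * d ^ (2 ^ i)))) +
      (a * d ^ (2 ^ i + 1) + v * d) := by
    have hxd : (x + d) ^ (2 ^ i + 1) = (x ^ (2 ^ i) + d ^ (2 ^ i)) * (x + d) := by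
      rw [pow_succ, add_pow_char_pow]
    rw [hxd, pow_succ, pow_succ]
    ring
  rw [expand, map_add, map_add]
  congr 2
  rw [map_add, mul_add, map_add, tr_shift hm x (a * d)]

lemma rq_zero_iff (hm : m ≠ 0) (a d : K) :
    (a * d) ^ (2 ^ (i * (m - 1))) + a * d ^ (2 ^ i) = 0 ↔
      a * d = a ^ (2 ^ i) * d ^ (2 ^ (2 * i)) := by
  rw [char2_add_eq_zero]
  have hY : (a * d ^ (2 ^ i)) ^ (2 ^ i) = a ^ (2 ^ i) * d ^ (2 ^ (2 * i)) := by
    rw [mul_pow, ← pow_mul, ← pow_add]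
    congr 2
    rw [two_mul]
  constructor
  · intro h
    have := congrArg (fun z : K => z ^ (2 ^ i)) h
    rw [pow_shift hm, hY] at this
    exact this
  · intro h
    apply pow2i_inj (i := i)
    rw [pow_shift hm, hY, h]

lemma exists_u (hm : m ≠ 0) (hme : Even m) (hi : Nat.gcd i m = 1) {a d : K}
    (ha : a ≠ 0) (hd : d ≠ 0) (hrel : a * d = a ^ (2 ^ i) * d ^ (2 ^ (2 * i))) :
    a = (d⁻¹) ^ (2 ^ i + 1) := by
  set t := a * d ^ (2 ^ i + 1) with ht
  have hexp : (2 ^ i + 1) * 2 ^ i = 2 ^ (2 * i) + 2 ^ i := by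
    rw [add_mul, one_mul, ← pow_add]
    congr 2
    rw [two_mul]
  have htfix : t ^ (2 ^ i) = t := by
    rw [ht, mul_pow, ← pow_mul, hexp, pow_add, ← mul_assoc, ← hrel, pow_succ]
    ring
  have ht0 : t ≠ 0 := mul_ne_zero ha (pow_ne_zero _ hd)
  have h2 : t ^ (2 ^ 1) = t :=
    fix_gcd t (i_pos hm hme hi) (Nat.pos_of_ne_zero hm) hi htfix (powK hm t)
  have ht1 : t = 1 := by
    have h3 : t * t = t * 1 := by
      rw [mul_one, ← sq]
      simpa using h2
    exact mul_left_cancel₀ ht0 h3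
  rw [inv_pow]
  exact eq_inv_of_mul_eq_one_left ht1

lemma W_iff (hm : m ≠ 0) (hme : Even m) (hi : Nat.gcd i m = 1) {u : K} (hu : u ≠ 0) (d : K) :
    u ^ (2 ^ i + 1) * d = (u ^ (2 ^ i + 1)) ^ (2 ^ i) * d ^ (2 ^ (2 * i)) ↔
      (u * d) ^ 4 = u * d := by
  have hexp : (2 ^ i + 1) * 2 ^ i = 2 ^ (2 * i) + 2 ^ i := by
    rw [add_mul, one_mul, ← pow_add]
    congr 2
    rw [two_mul]
  have hL : (u ^ (2 ^ i + 1)) ^ (2 ^ i) * d ^ (2 ^ (2 * i)) =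
      u ^ (2 ^ i) * (u * d) ^ (2 ^ (2 * i)) := by
    rw [← pow_mul, hexp, pow_add, mul_pow]
    ring
  have hR : u ^ (2 ^ i + 1) * d = u ^ (2 ^ i) * (u * d) := by
    rw [pow_succ]
    ring
  rw [hL, hR, mul_right_inj' (pow_ne_zero _ hu)]
  constructor
  · intro h
    have h4 : (u * d) ^ (2 ^ 2) = u * d :=
      fix_gcd (u * d) (by have := i_pos hm hme hi; omega) (Nat.pos_of_ne_zero hm)
        (gcd_two hme hi) h.symm (powK hm (u * d))
    simpa using h4
  · intro h
    exact (c4_pow_even h i).symm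

end Quad

section Assembly
variable {m i : ℕ} [Fintype (GaloisField 2 m)] [DecidableEq (GaloisField 2 m)]

local notation "K" => GaloisField 2 m
local notation "trK" => Algebra.trace (ZMod 2) (GaloisField 2 m)

lemma tr_pow_e_zero (hm : m ≠ 0) (hme : Even m) (hodd : Odd i) {c : K} (hc : c ^ 4 = c) :
    trK (c ^ (2 ^ i + 1)) = 0 := by
  have h1 : c ^ (2 ^ i + 1) = c ^ 3 := by
    rw [pow_succ, c4_pow_odd hc hodd, ← pow_succ]
  rw [h1]
  exact tr_c4_cube hm hme hc

lemma F4sum_eq_zero_iff (hm : m ≠ 0) (hme : Even m) (w : K) :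
    (∑ c ∈ Finset.univ.filter (fun c : K => c ^ 4 = c), e2 (trK (w * c))) = 0 ↔
      Trel m w ≠ 0 := by
  constructor
  · intro hsum hT0
    have hterm : ∀ c ∈ Finset.univ.filter (fun c : K => c ^ 4 = c), e2 (trK (w * c)) = 1 := by
      intro c hc
      rw [tr_of_Trel_zero hm hme hT0 (Finset.mem_filter.mp hc).2, e2_zero]
    rw [Finset.sum_congr rfl hterm, Finset.sum_const, nsmul_eq_mul, mul_one] at hsum
    have h0 : (0 : K) ∈ Finset.univ.filter (fun c : K => c ^ 4 = c) := by
      simp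
    have := Finset.card_pos.mpr ⟨0, h0⟩
    omega
  · intro hT
    obtain ⟨c₀, hc₀4, hc₀tr⟩ := (Trel_ne_iff hm hme w).mp hT
    refine sum_e2_closed _ ?_ (fun c => trK (w * c)) ?_ ?_ hc₀tr
    · intro c hc d hd
      rw [Finset.mem_filter] at *
      exact ⟨Finset.mem_univ _, c4_add hc.2 hd.2⟩
    · intro c d
      rw [mul_add, map_add]
    · exact Finset.mem_filter.mpr ⟨Finset.mem_univ _, hc₀4⟩

lemma Wsum_eq (hm : m ≠ 0) (hme : Even m) (hi : Nat.gcd i m = 1) (v : K) {u : K}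
    (hu0 : u ≠ 0) :
    ∑ d ∈ Finset.univ.filter
        (fun d : K => (u ^ (2 ^ i + 1) * d) ^ (2 ^ (i * (m - 1)))
          + u ^ (2 ^ i + 1) * d ^ (2 ^ i) = 0),
        e2 (trK (u ^ (2 ^ i + 1) * d ^ (2 ^ i + 1) + v * d))
      = ∑ c ∈ Finset.univ.filter (fun c : K => c ^ 4 = c), e2 (trK ((v * u⁻¹) * c)) := by
  have hmem : ∀ d : K,
      ((u ^ (2 ^ i + 1) * d) ^ (2 ^ (i * (m - 1))) + u ^ (2 ^ i + 1) * d ^ (2 ^ i) = 0)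
        ↔ (u * d) ^ 4 = u * d := by
    intro d
    rw [rq_zero_iff hm, W_iff hm hme hi hu0]
  refine Finset.sum_nbij' (fun d => u * d) (fun c => u⁻¹ * c) ?_ ?_ ?_ ?_ ?_
  · intro d hd
    rw [Finset.mem_filter] at *
    exact ⟨Finset.mem_univ _, (hmem d).mp hd.2⟩
  · intro c hc
    rw [Finset.mem_filter] at *
    refine ⟨Finset.mem_univ _, (hmem _).mpr ?_⟩
    rw [mul_inv_cancel_left₀ hu0]
    exact hc.2
  · intro d _
    show u⁻¹ * (u * d) = d
    rw [inv_mul_cancel_left₀ hu0]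
  · intro c _
    show u * (u⁻¹ * c) = c
    rw [mul_inv_cancel_left₀ hu0]
  · intro d hd
    rw [Finset.mem_filter] at hd
    have h1 : u ^ (2 ^ i + 1) * d ^ (2 ^ i + 1) = (u * d) ^ (2 ^ i + 1) := by
      rw [mul_pow]
    have h2 : trK ((u * d) ^ (2 ^ i + 1) + v * d) =
        trK ((u * d) ^ (2 ^ i + 1)) + trK (v * d) := map_add _ _ _
    rw [h1, h2, tr_pow_e_zero hm hme (i_odd hme hi) ((hmem d).mp hd.2), zero_add]
    congr 2
    field_simp

/-- If there is a `(2^i+1)`-th root `u` with nonzero relative trace, the character sum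
vanishes. -/
lemma Svanish (hm : m ≠ 0) (hme : Even m) (hi : Nat.gcd i m = 1) (v : K) {u : K}
    (hu0 : u ≠ 0) (hT : Trel m (v * u⁻¹) ≠ 0) :
    ∑ x : K, e2 (trK (u ^ (2 ^ i + 1) * x ^ (2 ^ i + 1) + v * x)) = 0 := by
  have hsq := sq_sum hm (fun x => trK (u ^ (2 ^ i + 1) * x ^ (2 ^ i + 1) + v * x))
    (fun d => (u ^ (2 ^ i + 1) * d) ^ (2 ^ (i * (m - 1))) + u ^ (2 ^ i + 1) * d ^ (2 ^ i))
    (fun x d => quad_decomp hm _ v x d)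
  rw [Wsum_eq hm hme hi v hu0, (F4sum_eq_zero_iff hm hme _).mpr hT, mul_zero] at hsq
  exact pow_eq_zero_iff (n := 2) (by norm_num) |>.mp hsq

/-- Conversely, if the character sum vanishes then a root with nonzero relative
trace exists. -/
lemma Sextract (hm : m ≠ 0) (hme : Even m) (hi : Nat.gcd i m = 1) {a : K} (v : K)
    (ha : a ≠ 0) (hS : ∑ x : K, e2 (trK (a * x ^ (2 ^ i + 1) + v * x)) = 0) :
    ∃ u : K, a = u ^ (2 ^ i + 1) ∧ Trel m (v * u⁻¹) ≠ 0 := by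
  have hsq := sq_sum hm (fun x => trK (a * x ^ (2 ^ i + 1) + v * x))
    (fun d => (a * d) ^ (2 ^ (i * (m - 1))) + a * d ^ (2 ^ i))
    (fun x d => quad_decomp hm a v x d)
  rw [hS] at hsq
  have hW0 : ∑ d ∈ Finset.univ.filter
      (fun d : K => (a * d) ^ (2 ^ (i * (m - 1))) + a * d ^ (2 ^ i) = 0),
      e2 (trK (a * d ^ (2 ^ i + 1) + v * d)) = 0 := by
    have h2m : (0:ℤ) ≠ 2 ^ m := by positivity
    have := hsq.symm
    rcases mul_eq_zero.mp (by linarith [this] : (2 ^ m : ℤ) * ∑ d ∈ Finset.univ.filter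
      (fun d : K => (a * d) ^ (2 ^ (i * (m - 1))) + a * d ^ (2 ^ i) = 0),
      e2 (trK (a * d ^ (2 ^ i + 1) + v * d)) = 0) with h | h
    · exact absurd h.symm h2m
    · exact h
  have h0mem : (0 : K) ∈ Finset.univ.filter
      (fun d : K => (a * d) ^ (2 ^ (i * (m - 1))) + a * d ^ (2 ^ i) = 0) := by
    rw [Finset.mem_filter]
    refine ⟨Finset.mem_univ _, ?_⟩
    rw [mul_zero, zero_pow (by positivity), zero_pow (by positivity), mul_zero, add_zero]
  -- there must be a nonzero element in the radical
  have hex : ∃ d : K, d ≠ 0 ∧ (a * d) ^ (2 ^ (i * (m - 1))) + a * d ^ (2 ^ i) = 0 := by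
    by_contra hno
    push_neg at hno
    have hsing : Finset.univ.filter
        (fun d : K => (a * d) ^ (2 ^ (i * (m - 1))) + a * d ^ (2 ^ i) = 0) = {0} := by
      apply Finset.Subset.antisymm
      · intro d hd
        rw [Finset.mem_filter] at hd
        rcases eq_or_ne d 0 with rfl | hd0
        · exact Finset.mem_singleton_self 0
        · exact absurd hd.2 (hno d hd0)
      · intro d hd
        rw [Finset.mem_singleton] at hd
        subst hd
        exact h0mem
    rw [hsing, Finset.sum_singleton] at hW0
    have : a * (0:K) ^ (2 ^ i + 1) + v * 0 = 0 := by
      rw [zero_pow (by positivity), mul_zero, mul_zero, add_zero]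
    rw [this, map_zero, e2_zero] at hW0
    omega
  obtain ⟨d, hd0, hdrel⟩ := hex
  have hrel : a * d = a ^ (2 ^ i) * d ^ (2 ^ (2 * i)) := (rq_zero_iff hm a d).mp hdrel
  have hu : a = (d⁻¹) ^ (2 ^ i + 1) := exists_u hm hme hi ha hd0 hrel
  refine ⟨d⁻¹, hu, ?_⟩
  have hu0 : d⁻¹ ≠ 0 := inv_ne_zero hd0
  rw [← F4sum_eq_zero_iff hm hme, ← Wsum_eq hm hme hi v hu0, ← hW0]
  apply Finset.sum_congr
  · ext d'
    simp only [Finset.mem_filter, Finset.mem_univ, true_and]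
    rw [← hu]
  · intro d' hd'
    rw [← hu]

end Assembly

end Stmt12Aux
/-- Let `m` be even, `gcd(i,m) = 1`, `L` linear on `𝔽_{2^m}` with adjoint `L*`
(i.e. `tr(L(x)·y) = tr(x·L*(y))`).  Then `F(x) = L(x^{2^i+1}) + x` is a
permutation iff for every `v` with `L*(v) ≠ 0` there is `u` with
`L*(v) = u^{2^i+1}` and `tr_{m/2}(v/u) ≠ 0`, where `tr_{m/2}` is the relative
trace onto `𝔽₄`. -/
theorem stmt_12 (m i : ℕ) (hm : 0 < m) (hme : Even m) (hi : Nat.gcd i m = 1)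
    (L Ls : GaloisField 2 m →ₗ[ZMod 2] GaloisField 2 m)
    (hadj : ∀ x y : GaloisField 2 m,
      Algebra.trace (ZMod 2) (GaloisField 2 m) (L x * y) =
      Algebra.trace (ZMod 2) (GaloisField 2 m) (x * Ls y)) :
    Function.Bijective (fun x : GaloisField 2 m => L (x ^ (2 ^ i + 1)) + x) ↔
    ∀ v : GaloisField 2 m, Ls v ≠ 0 →
      ∃ u : GaloisField 2 m, Ls v = u ^ (2 ^ i + 1) ∧
        (∑ k ∈ Finset.range (m / 2), (v / u) ^ (2 ^ (2 * k))) ≠ 0 := by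
  classical
  letI : Fintype (GaloisField 2 m) := Fintype.ofFinite _
  have hm0 : m ≠ 0 := hm.ne'
  have hFf : ∀ v x : GaloisField 2 m,
      Algebra.trace (ZMod 2) (GaloisField 2 m) (v * (L (x ^ (2 ^ i + 1)) + x)) =
      Algebra.trace (ZMod 2) (GaloisField 2 m) (Ls v * x ^ (2 ^ i + 1) + v * x) := by
    intro v x
    rw [mul_add, map_add, map_add]
    congr 1
    rw [mul_comm v (L _), hadj, mul_comm (x ^ (2 ^ i + 1)) (Ls v)]
  constructor
  · intro hbij v hv
    have hv0 : v ≠ 0 := by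
      intro h0
      exact hv (by rw [h0, map_zero])
    have hS := Stmt12Aux.sums_of_bij hm0 _ hbij v hv0
    have hS' : ∑ x : GaloisField 2 m,
        Stmt12Aux.e2 (Algebra.trace (ZMod 2) (GaloisField 2 m)
          (Ls v * x ^ (2 ^ i + 1) + v * x)) = 0 := by
      rw [← hS]
      exact (Finset.sum_congr rfl fun x _ => by rw [hFf v x])
    obtain ⟨u, hu, hT⟩ := Stmt12Aux.Sextract hm0 hme hi v hv hS'
    refine ⟨u, hu, ?_⟩
    rw [div_eq_mul_inv]
    exact hT
  · intro hrhs
    apply Stmt12Aux.bij_of_sums hm0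
    intro v hv
    have heq : ∑ x : GaloisField 2 m,
        Stmt12Aux.e2 (Algebra.trace (ZMod 2) (GaloisField 2 m)
          (v * (L (x ^ (2 ^ i + 1)) + x))) =
        ∑ x : GaloisField 2 m,
        Stmt12Aux.e2 (Algebra.trace (ZMod 2) (GaloisField 2 m)
          (Ls v * x ^ (2 ^ i + 1) + v * x)) :=
      Finset.sum_congr rfl fun x _ => by rw [hFf v x]
    rw [heq]
    rcases eq_or_ne (Ls v) 0 with h0 | h0
    · have heq2 : ∑ x : GaloisField 2 m,
          Stmt12Aux.e2 (Algebra.trace (ZMod 2) (GaloisField 2 m)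
            (Ls v * x ^ (2 ^ i + 1) + v * x)) =
          ∑ x : GaloisField 2 m,
          Stmt12Aux.e2 (Algebra.trace (ZMod 2) (GaloisField 2 m) (v * x)) :=
        Finset.sum_congr rfl fun x _ => by rw [h0, zero_mul, zero_add]
      rw [heq2, Stmt12Aux.sum_e2_full hm0 v, if_neg hv]
    · obtain ⟨u, hu, hT⟩ := hrhs v h0
      have hu0 : u ≠ 0 := by
        rintro rfl
        rw [zero_pow (by positivity)] at hu
        exact h0 hu
      have hT' : Stmt12Aux.Trel m (v * u⁻¹) ≠ 0 := by
        rw [← div_eq_mul_inv]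
        exact hT
      have hvan := Stmt12Aux.Svanish hm0 hme hi v hu0 hT'
      rw [hu]
      exact hvan
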